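/- arXiv:1511.03117 — 2 statements merged into one kernel-verified Lean document; each statement's English description precedes it below -/
import Mathlib

section
/- Let Π = {z ∈ ℂ : Im z > 0} be the upper half-plane and 𝔻 the unit disc. For every z ∈ Π ∩ 𝔻, 0 ≤ κ_{Π∩𝔻}(z) − 1/(2 Im z) ≤ |z|/(1 − |z|²), where κ_{Π∩𝔻} is the Kobayashi metric of Π ∩ 𝔻 (and 1/(2 Im z) is the Kobayashi metric of Π at z). -/
set_option maxHeartbeats 1000000


noncomputable section

/-- The Kobayashi metric of a planar domain `D` (at vector `1`):
`κ_D(z) = inf {|α| : ∃ φ ∈ O(𝔻, D), φ 0 = z, α • φ'(0) = 1}`. -/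
def kobMetric (D : Set ℂ) (z : ℂ) : ℝ :=
  sInf {r : ℝ | ∃ α : ℂ, r = ‖α‖ ∧ ∃ φ : ℂ → ℂ,
    DifferentiableOn ℂ φ (Metric.ball 0 1) ∧ Set.MapsTo φ (Metric.ball 0 1) D ∧
    φ 0 = z ∧ α * deriv φ 0 = 1}

/-- The Carathéodory metric of a planar domain `D` (at vector `1`):
`γ_D(z) = sup {|ψ'(z)| : ψ ∈ O(D, 𝔻), ψ z = 0}`. -/
def caraMetric (D : Set ℂ) (z : ℂ) : ℝ :=
  sSup {r : ℝ | ∃ ψ : ℂ → ℂ, DifferentiableOn ℂ ψ D ∧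
    Set.MapsTo ψ D (Metric.ball 0 1) ∧ ψ z = 0 ∧ r = ‖deriv ψ z‖}

/-- The Bergman kernel of `D` on the diagonal. -/
def bergmanKernel (D : Set ℂ) (z : ℂ) : ℝ :=
  sSup {r : ℝ | ∃ f : ℂ → ℂ, DifferentiableOn ℂ f D ∧
    (∫⁻ w in D, (‖f w‖₊ : ENNReal) ^ 2) ≤ 1 ∧ r = ‖f z‖ ^ 2}

/-- `M_D(z) = sup {|f'(z)| : f ∈ L²_h(D), ‖f‖ ≤ 1, f z = 0}`. -/
def bergmanM (D : Set ℂ) (z : ℂ) : ℝ :=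
  sSup {r : ℝ | ∃ f : ℂ → ℂ, DifferentiableOn ℂ f D ∧
    (∫⁻ w in D, (‖f w‖₊ : ENNReal) ^ 2) ≤ 1 ∧ f z = 0 ∧ r = ‖deriv f z‖}

/-- The Bergman metric `β_D = M_D / √K_D`. -/
def bergmanMetric (D : Set ℂ) (z : ℂ) : ℝ := bergmanM D z / Real.sqrt (bergmanKernel D z)

/-- A set `E ⊆ ℂ` is polar iff it has zero logarithmic capacity, i.e. every nonzero finite
measure compactly supported in `E` has infinite logarithmic energy
`∫∫ log(1/|z-w|) dμ dμ = +∞` (equivalently, `log dist` is not `μ ⊗ μ`-integrable). -/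
def IsPolar (E : Set ℂ) : Prop :=
  ∀ μ : MeasureTheory.Measure ℂ, MeasureTheory.IsFiniteMeasure μ → μ ≠ 0 →
    (∃ K : Set ℂ, IsCompact K ∧ K ⊆ E ∧ μ Kᶜ = 0) →
    ¬ MeasureTheory.Integrable (fun p : ℂ × ℂ => Real.log (dist p.1 p.2)) (μ.prod μ)

/-- Signed curvature of a plane curve `γ` at parameter `t`:
`Im(conj γ'(t) * γ''(t)) / |γ'(t)|³`. -/
def signedCurv (γ : ℝ → ℂ) (t : ℝ) : ℝ :=
  ((starRingEnd ℂ) (deriv γ t) * deriv (deriv γ) t).im / ‖deriv γ t‖ ^ 3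

/-- Inverse hyperbolic tangent. -/
def artanh (x : ℝ) : ℝ := Real.log ((1 + x) / (1 - x)) / 2

/-- The Carathéodory distance:
`c_D(z,w) = sup {artanh |ψ w| : ψ ∈ O(D, 𝔻), ψ z = 0}`. -/
def caraDist (D : Set ℂ) (z w : ℂ) : ℝ :=
  sSup {r : ℝ | ∃ ψ : ℂ → ℂ, DifferentiableOn ℂ ψ D ∧ Set.MapsTo ψ D (Metric.ball 0 1) ∧
    ψ z = 0 ∧ r = artanh (‖ψ w‖)}

/-- The Lempert function:
`l_D(z,w) = inf {artanh |α| : ∃ φ ∈ O(𝔻, D), φ 0 = z, φ α = w}`. -/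
def lempertFun (D : Set ℂ) (z w : ℂ) : ℝ :=
  sInf {r : ℝ | ∃ α : ℂ, ‖α‖ < 1 ∧ r = artanh (‖α‖) ∧
    ∃ φ : ℂ → ℂ, DifferentiableOn ℂ φ (Metric.ball 0 1) ∧ Set.MapsTo φ (Metric.ball 0 1) D ∧
    φ 0 = z ∧ φ α = w}

/-- The Kobayashi distance: the largest pseudodistance on `D` not exceeding
the Lempert function. -/
def kobDist (D : Set ℂ) (z w : ℂ) : ℝ :=
  sSup {r : ℝ | ∃ p : ℂ → ℂ → ℝ, (∀ x ∈ D, p x x = 0) ∧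
    (∀ x ∈ D, ∀ y ∈ D, 0 ≤ p x y) ∧ (∀ x ∈ D, ∀ y ∈ D, p x y = p y x) ∧
    (∀ x ∈ D, ∀ y ∈ D, ∀ u ∈ D, p x u ≤ p x y + p y u) ∧
    (∀ x ∈ D, ∀ y ∈ D, p x y ≤ lempertFun D x y) ∧ r = p z w}

/-- The Bergman distance: the integrated form of the Bergman metric. -/
def bergmanDist (D : Set ℂ) (z w : ℂ) : ℝ :=
  sInf {r : ℝ | ∃ γ : ℝ → ℂ, ContDiff ℝ 1 γ ∧ (∀ t ∈ Set.Icc (0:ℝ) 1, γ t ∈ D) ∧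
    γ 0 = z ∧ γ 1 = w ∧
    r = ∫ t in (0:ℝ)..1, bergmanMetric D (γ t) * ‖deriv γ t‖}

/-- `s_D(z,w) = arsinh (|z-w| / (2 √(d_D(z) d_D(w))))`. -/
def sFun (D : Set ℂ) (z w : ℂ) : ℝ :=
  Real.arsinh (‖z - w‖ /
    (2 * Real.sqrt (Metric.infDist z (frontier D) * Metric.infDist w (frontier D))))

/-- `a` is a `C¹`-smooth boundary point of `D`: near `a` the boundary `∂D` is the image of a
`C¹` curve with nonvanishing derivative. -/
def IsC1BoundaryPoint (D : Set ℂ) (a : ℂ) : Prop :=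
  a ∈ frontier D ∧ ∃ (U : Set ℂ) (γ : ℝ → ℂ), IsOpen U ∧ a ∈ U ∧
    ContDiff ℝ 1 γ ∧ (∀ t, deriv γ t ≠ 0) ∧ Set.InjOn γ (Set.Icc 0 1) ∧
    frontier D ∩ U = γ '' Set.Ioo 0 1

/-- `a` is a `C^{1,ε}`-smooth boundary point of `D`: near `a` the boundary `∂D` is the image of
a `C¹` curve with nonvanishing, `ε`-Hölder continuous derivative. -/
def IsC1epsBoundaryPoint (ε : ℝ) (D : Set ℂ) (a : ℂ) : Prop :=
  a ∈ frontier D ∧ ∃ (U : Set ℂ) (γ : ℝ → ℂ), IsOpen U ∧ a ∈ U ∧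
    ContDiff ℝ 1 γ ∧ (∀ t, deriv γ t ≠ 0) ∧ Set.InjOn γ (Set.Icc 0 1) ∧
    frontier D ∩ U = γ '' Set.Ioo 0 1 ∧
    ∃ C : NNReal, HolderOnWith C ε.toNNReal (deriv γ) (Set.Icc 0 1)

/-- `a` is a Dini-smooth boundary point of `D`: near `a` the boundary `∂D` is the image of a
`C¹` curve with nonvanishing derivative admitting a modulus of continuity `ω` with
`∫₀¹ ω(t)/t dt < ∞`. -/
def IsDiniBoundaryPoint (D : Set ℂ) (a : ℂ) : Prop :=
  a ∈ frontier D ∧ ∃ (U : Set ℂ) (γ : ℝ → ℂ), IsOpen U ∧ a ∈ U ∧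
    ContDiff ℝ 1 γ ∧ (∀ t, deriv γ t ≠ 0) ∧ Set.InjOn γ (Set.Icc 0 1) ∧
    frontier D ∩ U = γ '' Set.Ioo 0 1 ∧
    ∃ ω : ℝ → ℝ, (∀ t, 0 ≤ ω t) ∧
      (∀ s ∈ Set.Icc (0:ℝ) 1, ∀ t ∈ Set.Icc (0:ℝ) 1,
        ‖deriv γ s - deriv γ t‖ ≤ ω |s - t|) ∧
      MeasureTheory.IntegrableOn (fun t => ω t / t) (Set.Ioc (0:ℝ) 1)

open Complex Metric Set

private lemma normSq_sub_sub_conj (u v : ℂ) :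
    Complex.normSq (u - v) = Complex.normSq (u - (starRingEnd ℂ) v) - 4 * u.im * v.im := by
  simp only [Complex.normSq_apply, Complex.sub_re, Complex.sub_im, Complex.conj_re,
    Complex.conj_im]
  ring

private lemma one_sub_sq_mem_slitPlane {w : ℂ} (hw : 0 < w.im) :
    1 - w ^ 2 ∈ Complex.slitPlane := by
  rw [Complex.mem_slitPlane_iff]
  have hre : (1 - w ^ 2).re = 1 - (w.re * w.re - w.im * w.im) := by
    simp [pow_two, Complex.mul_re]
  have him : (1 - w ^ 2).im = -(2 * w.re * w.im) := by
    simp [pow_two, Complex.mul_im]; ring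
  rcases eq_or_ne w.re 0 with h | h
  · left; rw [hre, h]; nlinarith
  · right; rw [him]
    exact neg_ne_zero.2 (mul_ne_zero (mul_ne_zero two_ne_zero h) hw.ne')

private lemma upper_mem_aux {z : ℂ} (hzim : 0 < z.im) (hzb : z ∈ Metric.ball (0:ℂ) 1) :
    ∃ α : ℂ,
      ‖α‖ ≤ 1 / (2 * z.im) + ‖z‖ / (1 - ‖z‖ ^ 2) ∧
      ∃ φ : ℂ → ℂ, DifferentiableOn ℂ φ (Metric.ball 0 1) ∧
        Set.MapsTo φ (Metric.ball 0 1) ({w : ℂ | 0 < w.im} ∩ Metric.ball 0 1) ∧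
        φ 0 = z ∧ α * deriv φ 0 = 1 := by
  have hz0 : z ≠ 0 := by
    intro hc; rw [hc] at hzim; simp at hzim
  have hb1 : ‖z‖ < 1 := mem_ball_zero_iff.1 hzb
  have hnsq0 : 0 < Complex.normSq z := Complex.normSq_pos.2 hz0
  have hnsq1 : Complex.normSq z < 1 := by
    rw [← Complex.sq_norm]; nlinarith [norm_nonneg z]
  set h : ℂ := -(z + z⁻¹) / 2 with hh
  have himh : h.im = z.im * (1 - Complex.normSq z) / (2 * Complex.normSq z) := by
    have h2n : (2 : ℝ) * Complex.normSq z ≠ 0 := by positivity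
    have hden2 : z.im ^ 2 + z.re ^ 2 ≠ 0 := by nlinarith [sq_nonneg z.re]
    rw [eq_div_iff h2n, hh]
    simp only [Complex.div_im, Complex.neg_im, Complex.neg_re, Complex.add_im, Complex.add_re,
      Complex.inv_im, Complex.inv_re, Complex.normSq_apply, Complex.re_ofNat, Complex.im_ofNat]
    norm_num
    linear_combination (z.im) * mul_inv_cancel₀ hden2
  have hhim : 0 < h.im := by
    rw [himh]
    apply div_pos
    · nlinarith
    · nlinarith
  have hzsq1 : z ^ 2 ≠ 1 := by
    intro hc
    have := congrArg Complex.normSq hc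
    rw [map_pow, map_one] at this
    nlinarith
  have h1z2 : (1 : ℂ) - z ^ 2 ≠ 0 := sub_ne_zero.2 (Ne.symm hzsq1)
  have hzh_sq : (z + h) ^ 2 = h ^ 2 - 1 := by
    rw [hh]; field_simp; ring
  have hzh_val : z + h = (z ^ 2 - 1) / (2 * z) := by
    rw [hh]; field_simp; ring
  have hzh_ne : z + h ≠ 0 := by
    rw [hzh_val]
    exact div_ne_zero (sub_ne_zero.2 hzsq1) (by simp [hz0])
  have hwslit : 1 - h ^ 2 ∈ Complex.slitPlane := one_sub_sq_mem_slitPlane hhim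
  have hw0 : (1 : ℂ) - h ^ 2 ≠ 0 := Complex.slitPlane_ne_zero hwslit
  set s : ℂ := (1 - h ^ 2) ^ (1/2 : ℂ) with hsdef
  have hs2 : s ^ 2 = 1 - h ^ 2 := by
    rw [hsdef, sq, ← Complex.cpow_add _ _ hw0]
    norm_num
  have hs0 : s ≠ 0 := by
    intro hc
    rw [hc] at hs2
    exact hw0 (by rw [← hs2]; norm_num)
  set ε : ℂ := (z + h) / s with hεdef
  have hεs : ε * s = z + h := div_mul_cancel₀ _ hs0
  have hε2 : ε ^ 2 = -1 := by
    rw [hεdef, div_pow, hs2, hzh_sq]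
    field_simp
    ring
  have hε0 : ε ≠ 0 := by
    intro hc; rw [hc] at hε2; norm_num at hε2
  have hsε : s + ε * h = -(z * ε) := by
    have h1 : ε * (s + ε * h) = ε * -(z * ε) := by
      linear_combination hεs + h * hε2 + z * hε2
    exact mul_left_cancel₀ hε0 h1
  set f : ℂ → ℂ := fun l => (h - l * (starRingEnd ℂ) h) / (1 - l) with hf
  have hl1 : ∀ ⦃l : ℂ⦄, l ∈ Metric.ball (0:ℂ) 1 → (1 : ℂ) - l ≠ 0 := by
    intro l hl hc
    have : l = 1 := by linear_combination -hc
    rw [this] at hl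
    simp at hl
  have hfid : ∀ ⦃l : ℂ⦄, l ∈ Metric.ball (0:ℂ) 1 →
      f l - h = l * (f l - (starRingEnd ℂ) h) := by
    intro l hl
    rw [hf]
    field_simp [hl1 hl]
    ring
  have hchh : ((starRingEnd ℂ) h - h).im = -(2 * h.im) := by
    simp [Complex.sub_im, Complex.conj_im]; ring
  have hfim : ∀ ⦃l : ℂ⦄, l ∈ Metric.ball (0:ℂ) 1 → 0 < (f l).im := by
    intro l hl
    have hfch : f l - (starRingEnd ℂ) h ≠ 0 := by
      intro hc
      have h1 : f l = (starRingEnd ℂ) h := sub_eq_zero.1 hc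
      have h2 := hfid hl
      rw [h1, sub_self, mul_zero] at h2
      have h3 := congrArg Complex.im h2
      rw [hchh] at h3
      simp at h3
      linarith
    have hstep : Complex.normSq (f l - h) =
        Complex.normSq l * Complex.normSq (f l - (starRingEnd ℂ) h) := by
      rw [hfid hl, map_mul]
    have hpos : 0 < Complex.normSq (f l - (starRingEnd ℂ) h) := Complex.normSq_pos.2 hfch
    have hlt : Complex.normSq l < 1 := by
      have hlb := mem_ball_zero_iff.1 hl
      rw [← Complex.sq_norm]
      nlinarith [norm_nonneg l]
    have hkey := normSq_sub_sub_conj (f l) h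
    nlinarith
  have hfdiffAt : ∀ ⦃l : ℂ⦄, l ∈ Metric.ball (0:ℂ) 1 → DifferentiableAt ℂ f l := by
    intro l hl
    apply DifferentiableAt.div
    · fun_prop
    · fun_prop
    · exact hl1 hl
  set φ : ℂ → ℂ := fun l => -f l + ε * (1 - f l ^ 2) ^ (1/2 : ℂ) with hφ
  have hφdiff : DifferentiableOn ℂ φ (Metric.ball 0 1) := by
    intro l hl
    apply DifferentiableAt.differentiableWithinAt
    apply DifferentiableAt.add
    · exact (hfdiffAt hl).neg
    · apply DifferentiableAt.const_mul
      apply DifferentiableAt.cpow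
      · exact ((hfdiffAt hl).pow 2).const_sub 1
      · exact differentiableAt_const _
      · exact one_sub_sq_mem_slitPlane (hfim hl)
  have hf0 : f 0 = h := by simp [hf]
  have hφ0 : φ 0 = z := by
    rw [hφ]
    simp only [hf0]
    rw [← hsdef]
    linear_combination hεs
  have h0ball : (0:ℂ) ∈ Metric.ball (0:ℂ) 1 := Metric.mem_ball_self one_pos
  -- the quadratic equation satisfied by φ
  have hquad : ∀ ⦃l : ℂ⦄, l ∈ Metric.ball (0:ℂ) 1 →
      φ l ^ 2 + 2 * f l * φ l + 1 = 0 := by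
    intro l hl
    have hsl : ((1 - f l ^ 2) ^ (1/2 : ℂ)) ^ 2 = 1 - f l ^ 2 := by
      rw [sq, ← Complex.cpow_add _ _
        (Complex.slitPlane_ne_zero (one_sub_sq_mem_slitPlane (hfim hl)))]
      norm_num
    have h1 : φ l + f l = ε * (1 - f l ^ 2) ^ (1/2 : ℂ) := by rw [hφ]; ring
    have h2 : (ε * (1 - f l ^ 2) ^ (1/2 : ℂ)) ^ 2 = -(1 - f l ^ 2) := by
      rw [mul_pow, hε2, hsl]; ring
    linear_combination (φ l + f l + ε * (1 - f l ^ 2) ^ (1/2 : ℂ)) * h1 + h2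
  have hφim : ∀ ⦃l : ℂ⦄, l ∈ Metric.ball (0:ℂ) 1 → (φ l).im ≠ 0 := by
    intro l hl hc
    have hq := hquad hl
    have him := congrArg Complex.im hq
    simp only [Complex.add_im, Complex.mul_im, Complex.mul_re, Complex.one_im, Complex.zero_im,
      pow_two, Complex.re_ofNat, Complex.im_ofNat, hc] at him
    have hf := hfim hl
    have hre0 : (φ l).re = 0 := by nlinarith [him]
    have hφz : φ l = 0 := Complex.ext hre0 hc
    rw [hφz] at hq
    norm_num at hq
  have hφabs : ∀ ⦃l : ℂ⦄, l ∈ Metric.ball (0:ℂ) 1 → ‖φ l‖ ≠ 1 := by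
    intro l hl hc
    have hq := hquad hl
    have hn : Complex.normSq (φ l) = 1 := by rw [← Complex.sq_norm, hc]; norm_num
    have h1 : φ l * (starRingEnd ℂ) (φ l) = 1 := by
      rw [Complex.mul_conj, hn]; norm_num
    have key : φ l + 2 * f l + (starRingEnd ℂ) (φ l) = 0 := by
      linear_combination (starRingEnd ℂ) (φ l) * hq - (φ l + 2 * f l) * h1
    have him := congrArg Complex.im key
    simp only [Complex.add_im, Complex.mul_im, Complex.conj_im, Complex.zero_im,
      Complex.re_ofNat, Complex.im_ofNat] at him
    have := hfim hl
    nlinarith [him]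
  -- maps into the half-disc, by connectedness
  have hφcont : ContinuousOn φ (Metric.ball 0 1) := hφdiff.continuousOn
  have hmaps : Set.MapsTo φ (Metric.ball 0 1) ({w : ℂ | 0 < w.im} ∩ Metric.ball 0 1) := by
    set U : Set ℂ := Metric.ball 0 1 ∩ φ ⁻¹' ({w : ℂ | 0 < w.im} ∩ Metric.ball 0 1) with hU
    set V : Set ℂ := Metric.ball 0 1 ∩
      φ ⁻¹' ({w : ℂ | w.im < 0} ∪ {w : ℂ | 1 < ‖w‖}) with hV
    have hUopen : IsOpen U := hφcont.isOpen_inter_preimage Metric.isOpen_ball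
      ((isOpen_lt continuous_const Complex.continuous_im).inter Metric.isOpen_ball)
    have hVopen : IsOpen V := hφcont.isOpen_inter_preimage Metric.isOpen_ball
      ((isOpen_lt Complex.continuous_im continuous_const).union
        (isOpen_lt continuous_const continuous_norm))
    have hdisj : Disjoint U V := by
      rw [Set.disjoint_left]
      rintro a ⟨haball, hau⟩ ⟨-, hav⟩
      have h1 : 0 < (φ a).im := hau.1
      have h2 : ‖φ a‖ < 1 := by
        have := hau.2
        rwa [Metric.mem_ball, dist_zero_right] at this
      rcases hav with hav | hav
      · exact absurd h1 (not_lt.2 (le_of_lt hav))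
      · exact absurd h2 (not_lt.2 (le_of_lt hav))
    have hcover : Metric.ball (0:ℂ) 1 ⊆ U ∪ V := by
      intro l hl
      rcases lt_trichotomy ((φ l).im) 0 with hlt | heq | hgt
      · exact Or.inr ⟨hl, Or.inl hlt⟩
      · exact absurd heq (hφim hl)
      · rcases lt_trichotomy (‖φ l‖) 1 with hlt' | heq' | hgt'
        · refine Or.inl ⟨hl, ⟨hgt, ?_⟩⟩
          rw [Metric.mem_ball, dist_zero_right]
          exact hlt'
        · exact absurd heq' (hφabs hl)
        · exact Or.inr ⟨hl, Or.inr hgt'⟩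
    have hne : (Metric.ball (0:ℂ) 1 ∩ U).Nonempty := by
      refine ⟨0, h0ball, h0ball, ?_⟩
      rw [Set.mem_preimage, hφ0]
      exact ⟨hzim, hzb⟩
    have hsub := (convex_ball (0:ℂ) 1).isPreconnected.subset_left_of_subset_union
      hUopen hVopen hdisj hcover hne
    intro l hl
    exact (hsub hl).2
  -- derivative at 0
  have hfD0 : HasDerivAt f (h - (starRingEnd ℂ) h) 0 := by
    have hnum : HasDerivAt (fun l : ℂ => h - l * (starRingEnd ℂ) h)
        (-(starRingEnd ℂ) h) 0 := by
      simpa using ((hasDerivAt_id (0:ℂ)).mul_const ((starRingEnd ℂ) h)).const_sub h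
    have hden : HasDerivAt (fun l : ℂ => (1:ℂ) - l) (-1) 0 := by
      simpa using (hasDerivAt_id (0:ℂ)).const_sub (1:ℂ)
    have hdiv := hnum.div hden (by norm_num : (1:ℂ) - 0 ≠ 0)
    have e : h - (starRingEnd ℂ) h = (-(starRingEnd ℂ) h * (1 - 0) -
        (h - 0 * (starRingEnd ℂ) h) * -1) / (1 - 0) ^ 2 := by ring
    rw [e]; exact hdiv
  have hgD0 : HasDerivAt (fun l => 1 - f l ^ 2)
      (-((2:ℕ) * h ^ (2-1) * (h - (starRingEnd ℂ) h))) 0 := by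
    have := (hfD0.pow 2).const_sub 1
    rwa [hf0] at this
  have hsD0 : HasDerivAt (fun l => (1 - f l ^ 2) ^ (1/2 : ℂ))
      ((1/2 : ℂ) * (1 - h ^ 2) ^ ((1/2 : ℂ) - 1) *
        (-((2:ℕ) * h ^ (2-1) * (h - (starRingEnd ℂ) h)))) 0 := by
    have h1 := HasDerivAt.cpow_const (c := (1/2 : ℂ)) hgD0 (by rw [hf0]; exact hwslit)
    rwa [hf0] at h1
  have hφD0 : HasDerivAt φ
      (-(h - (starRingEnd ℂ) h) + ε * ((1/2 : ℂ) * (1 - h ^ 2) ^ ((1/2 : ℂ) - 1) *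
        (-((2:ℕ) * h ^ (2-1) * (h - (starRingEnd ℂ) h))))) 0 :=
    (hfD0.neg).add (hsD0.const_mul ε)
  have hwinv : (1 - h ^ 2) ^ ((1/2 : ℂ) - 1) = s⁻¹ := by
    have he : ((1/2 : ℂ) - 1) = -(1/2) := by norm_num
    rw [he, Complex.cpow_neg, ← hsdef]
  set F : ℂ := h - (starRingEnd ℂ) h with hF
  have hF0 : F ≠ 0 := by
    intro hc
    have := congrArg Complex.im hc
    simp only [hF, Complex.sub_im, Complex.conj_im, Complex.zero_im] at this
    linarith
  have hkey2 : ε * (1 - z ^ 2) = 2 * z * s := by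
    have hzh2 : 2 * z * h = -(z ^ 2 + 1) := by rw [hh]; field_simp
    have h12 : ε * (1 - z ^ 2) * s = 2 * z * s * s := by
      linear_combination (1 - z ^ 2) * hεs + (-2*z) * hs2 + (h - z) * hzh2
    exact mul_right_cancel₀ hs0 h12
  have hderiv : deriv φ 0 = 2 * z ^ 2 * F / (1 - z ^ 2) := by
    rw [hφD0.deriv, hwinv]
    have hds : (-(F) + ε * ((1/2 : ℂ) * s⁻¹ * (-((2:ℕ) * h ^ (2-1) * F)))) * s
        = F * z * ε := by
      push_cast
      linear_combination (-ε*h*F) * (inv_mul_cancel₀ hs0) + (-F) * hsε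
    have hne2 : s * (1 - z ^ 2) ≠ 0 := mul_ne_zero hs0 h1z2
    apply mul_right_cancel₀ hne2
    have hrhs : 2 * z ^ 2 * F / (1 - z ^ 2) * (s * (1 - z ^ 2)) = 2 * z ^ 2 * F * s := by
      field_simp
    rw [hrhs]
    calc (-(F) + ε * ((1/2 : ℂ) * s⁻¹ * (-((2:ℕ) * h ^ (2-1) * F)))) * (s * (1 - z ^ 2))
        = ((-(F) + ε * ((1/2 : ℂ) * s⁻¹ * (-((2:ℕ) * h ^ (2-1) * F)))) * s) * (1 - z ^ 2) := by
          ring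
      _ = (F * z * ε) * (1 - z ^ 2) := by rw [hds]
      _ = (F * z) * (ε * (1 - z ^ 2)) := by ring
      _ = (F * z) * (2 * z * s) := by rw [hkey2]
      _ = 2 * z ^ 2 * F * s := by ring
  set α : ℂ := (1 - z ^ 2) / (2 * z ^ 2 * F) with hαdef
  have hden_ne : 2 * z ^ 2 * F ≠ 0 :=
    mul_ne_zero (mul_ne_zero two_ne_zero (pow_ne_zero 2 hz0)) hF0
  have hα : α * deriv φ 0 = 1 := by
    rw [hαdef, hderiv]
    field_simp
  -- the bound on |α|
  have hFabs : ‖F‖ = 2 * h.im := by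
    rw [hF, Complex.sub_conj]
    rw [norm_mul, Complex.norm_I, mul_one, Complex.norm_real]
    rw [Real.norm_of_nonneg (by positivity)]
  have hr0 : 0 < ‖z‖ := norm_pos_iff.mpr hz0
  have h1r2 : 0 < 1 - ‖z‖ ^ 2 := by nlinarith
  have hαabs : ‖α‖ = ‖1 - z ^ 2‖ / (2 * z.im * (1 - ‖z‖ ^ 2)) := by
    rw [hαdef, norm_div, norm_mul, norm_mul, hFabs, norm_pow]
    have h2abs : ‖(2:ℂ)‖ = 2 := by
      rw [show (2:ℂ) = ((2:ℝ):ℂ) by norm_num, Complex.norm_real]; norm_num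
    rw [h2abs, himh, Complex.sq_norm]
    congr 1
    field_simp
  have hyr : z.im ≤ ‖z‖ := le_trans (le_abs_self _) (Complex.abs_im_le_norm z)
  have hkey3 : ‖1 - z ^ 2‖ ≤ 1 - ‖z‖ ^ 2 + 2 * z.im * ‖z‖ := by
    have hr2 : ‖z‖ ^ 2 = z.re ^ 2 + z.im ^ 2 := by
      rw [Complex.sq_norm, Complex.normSq_apply]; ring
    have hnexp : Complex.normSq (1 - z ^ 2) =
        (1 - (z.re ^ 2 - z.im ^ 2)) ^ 2 + (2 * z.re * z.im) ^ 2 := by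
      simp only [Complex.normSq_apply, Complex.sub_re, Complex.sub_im, Complex.one_re,
        Complex.one_im, pow_two, Complex.mul_re, Complex.mul_im]
      ring
    have hA : 0 ≤ 1 - z.re ^ 2 - z.im ^ 2 := by nlinarith
    have h5 : 0 ≤ z.im * (1 - z.re ^ 2 - z.im ^ 2) * (‖z‖ - z.im) :=
      mul_nonneg (mul_nonneg hzim.le hA) (sub_nonneg.2 hyr)
    have h6 : 4 * z.im ^ 2 * ‖z‖ ^ 2 = 4 * z.im ^ 2 * (z.re ^ 2 + z.im ^ 2) := by
      linear_combination 4 * z.im ^ 2 * hr2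
    have h1 : Complex.normSq (1 - z ^ 2) ≤
        (1 - ‖z‖ ^ 2 + 2 * z.im * ‖z‖) ^ 2 := by
      rw [hnexp, hr2]
      have hid : (1 - (z.re ^ 2 + z.im ^ 2) + 2 * z.im * ‖z‖) ^ 2 -
          ((1 - (z.re ^ 2 - z.im ^ 2)) ^ 2 + (2 * z.re * z.im) ^ 2) =
          4 * (z.im * (1 - z.re ^ 2 - z.im ^ 2) * (‖z‖ - z.im)) +
          (4 * z.im ^ 2 * ‖z‖ ^ 2 - 4 * z.im ^ 2 * (z.re ^ 2 + z.im ^ 2)) := by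
        ring
      linarith [h5, h6, hid]
    have hBnn : 0 ≤ 1 - ‖z‖ ^ 2 + 2 * z.im * ‖z‖ := by nlinarith
    calc ‖1 - z ^ 2‖ = Real.sqrt (Complex.normSq (1 - z ^ 2)) :=
          Complex.norm_def _
      _ ≤ Real.sqrt ((1 - ‖z‖ ^ 2 + 2 * z.im * ‖z‖) ^ 2) :=
          Real.sqrt_le_sqrt h1
      _ = 1 - ‖z‖ ^ 2 + 2 * z.im * ‖z‖ := by
          rw [Real.sqrt_sq hBnn]
  have hfinal : ‖α‖ ≤ 1 / (2 * z.im) + ‖z‖ / (1 - ‖z‖ ^ 2) := by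
    rw [hαabs]
    have hrhs : 1 / (2 * z.im) + ‖z‖ / (1 - ‖z‖ ^ 2) =
        (1 - ‖z‖ ^ 2 + 2 * z.im * ‖z‖) /
          (2 * z.im * (1 - ‖z‖ ^ 2)) := by
      field_simp
    rw [hrhs]
    exact (div_le_div_iff_of_pos_right (by positivity)).2 hkey3
  exact ⟨α, hfinal, φ, hφdiff, hmaps, hφ0, hα⟩

private lemma lower_bound_aux {z α : ℂ} {φ : ℂ → ℂ} (hzim : 0 < z.im)
    (hd : DifferentiableOn ℂ φ (Metric.ball 0 1))
    (hmap : Set.MapsTo φ (Metric.ball 0 1) ({w : ℂ | 0 < w.im} ∩ Metric.ball 0 1))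
    (h0 : φ 0 = z) (hα : α * deriv φ 0 = 1) :
    1 / (2 * z.im) ≤ ‖α‖ := by
  have hy : 0 < z.im := hzim
  have hne : ∀ ⦃l⦄, l ∈ Metric.ball (0:ℂ) 1 → φ l - (starRingEnd ℂ) z ≠ 0 := by
    intro l hl
    have him : 0 < (φ l).im := (hmap hl).1
    intro hc
    have : (φ l).im = ((starRingEnd ℂ) z).im := by rw [← sub_eq_zero.1 hc]
    rw [Complex.conj_im] at this
    linarith
  set g : ℂ → ℂ := fun l => (φ l - z) / (φ l - (starRingEnd ℂ) z) with hg
  have hgd : DifferentiableOn ℂ g (Metric.ball 0 1) := fun l hl =>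
    (((hd l hl).sub (differentiableWithinAt_const z)).div
      ((hd l hl).sub (differentiableWithinAt_const _)) (hne hl))
  have hg0 : g 0 = 0 := by simp [hg, h0]
  have hgm : Set.MapsTo g (Metric.ball 0 1) (Metric.ball (g 0) 1) := by
    rw [hg0]
    intro l hl
    rw [Metric.mem_ball, dist_zero_right, hg]
    have him : 0 < (φ l).im := (hmap hl).1
    have h1 : Complex.normSq (φ l - z) < Complex.normSq (φ l - (starRingEnd ℂ) z) := by
      have := normSq_sub_sub_conj (φ l) z
      nlinarith
    have h2 : 0 < ‖φ l - (starRingEnd ℂ) z‖ :=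
      norm_pos_iff.mpr (hne hl)
    rw [norm_div, div_lt_one h2]
    rw [Complex.norm_def, Complex.norm_def]
    exact Real.sqrt_lt_sqrt (Complex.normSq_nonneg _) h1
  have hschwarz := Complex.norm_deriv_le_div_of_mapsTo_ball hgd (hgm.mono_right Metric.ball_subset_closedBall) one_pos
  -- compute deriv g 0
  have h0ball : (0:ℂ) ∈ Metric.ball (0:ℂ) 1 := by simp
  have hφat : HasDerivAt φ (deriv φ 0) 0 :=
    (hd.differentiableAt (Metric.isOpen_ball.mem_nhds h0ball)).hasDerivAt
  have hzc : z - (starRingEnd ℂ) z ≠ 0 := by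
    intro hc
    have := congrArg Complex.im hc
    simp [Complex.sub_im, Complex.conj_im] at this
    linarith
  have hgat : HasDerivAt g ((deriv φ 0 * (φ 0 - (starRingEnd ℂ) z) -
      (φ 0 - z) * deriv φ 0) / (φ 0 - (starRingEnd ℂ) z) ^ 2) 0 := by
    exact (hφat.sub_const z).div (hφat.sub_const _) (by rw [h0]; exact hzc)
  have hderiv : deriv g 0 = deriv φ 0 / (z - (starRingEnd ℂ) z) := by
    rw [hgat.deriv, h0]
    field_simp
    ring
  rw [hderiv, norm_div] at hschwarz
  have habs : ‖z - (starRingEnd ℂ) z‖ = 2 * z.im := by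
    rw [Complex.sub_conj]
    rw [norm_mul, Complex.norm_I, mul_one, Complex.norm_real, Real.norm_of_nonneg (by positivity)]
  rw [habs] at hschwarz
  have hD : ‖deriv φ 0‖ ≤ 2 * z.im := by
    rw [div_le_div_iff₀ (by positivity) one_pos] at hschwarz
    linarith
  have h1 : ‖α‖ * ‖deriv φ 0‖ = 1 := by
    rw [← norm_mul, hα, norm_one]
  rw [div_le_iff₀ (by positivity)]
  calc (1:ℝ) = ‖α‖ * ‖deriv φ 0‖ := h1.symm
    _ ≤ ‖α‖ * (2 * z.im) := by
        exact mul_le_mul_of_nonneg_left hD (norm_nonneg α)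

/-- Localization lemma: if `Π` is the upper half-plane and `𝔻` the unit disc, then for
`z ∈ Π ∩ 𝔻` one has `0 ≤ κ_{Π ∩ 𝔻}(z) - 1/(2 Im z) ≤ |z|/(1 - |z|²)`
(here `1/(2 Im z)` is the Kobayashi metric of `Π` at `z`). -/
theorem kobayashi_metric_halfdisc_localization
    (z : ℂ) (hz : z ∈ {w : ℂ | 0 < w.im} ∩ Metric.ball 0 1) :
    0 ≤ kobMetric ({w : ℂ | 0 < w.im} ∩ Metric.ball 0 1) z - 1 / (2 * z.im) ∧
    kobMetric ({w : ℂ | 0 < w.im} ∩ Metric.ball 0 1) z - 1 / (2 * z.im) ≤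
      ‖z‖ / (1 - ‖z‖ ^ 2) := by
  obtain ⟨hzim', hzb⟩ := hz
  have hzim : 0 < z.im := hzim'
  obtain ⟨α, hαle, φ, hφd, hφm, hφ0, hφα⟩ := upper_mem_aux hzim hzb
  set S := {r : ℝ | ∃ α : ℂ, r = ‖α‖ ∧ ∃ φ : ℂ → ℂ,
    DifferentiableOn ℂ φ (Metric.ball 0 1) ∧
    Set.MapsTo φ (Metric.ball 0 1) ({w : ℂ | 0 < w.im} ∩ Metric.ball 0 1) ∧
    φ 0 = z ∧ α * deriv φ 0 = 1} with hS
  have hmem : ‖α‖ ∈ S := ⟨α, rfl, φ, hφd, hφm, hφ0, hφα⟩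
  have hlb : ∀ r ∈ S, 1 / (2 * z.im) ≤ r := by
    rintro r ⟨β, rfl, ψ, h1, h2, h3, h4⟩
    exact lower_bound_aux hzim h1 h2 h3 h4
  have hbdd : BddBelow S := ⟨1 / (2 * z.im), hlb⟩
  have hSne : S.Nonempty := ⟨_, hmem⟩
  have hge : 1 / (2 * z.im) ≤ sInf S := le_csInf hSne hlb
  have hle : sInf S ≤ ‖α‖ := csInf_le hbdd hmem
  have hk : kobMetric ({w : ℂ | 0 < w.im} ∩ Metric.ball 0 1) z = sInf S := rfl
  constructor
  · rw [hk]; linarith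
  · rw [hk]; linarith

end
end

section
/- Let ε ∈ (0,1) and define f(z) = z − z^{1+ε}/4 on 𝔻₁ = {z ∈ ℂ : |z−1| < 1}, using the principal branch of z^{1+ε}. Then Re f'(z) > 0 for all z ∈ 𝔻₁ and f is injective on 𝔻₁. -/
noncomputable section

open Complex Metric Set in
private lemma ball_facts {z : ℂ} (hz : z ∈ Metric.ball (1:ℂ) 1) :
    0 < z.re ∧ ‖z‖ < 2 := by
  rw [Metric.mem_ball, Complex.dist_eq] at hz
  have h1 : |z.re - 1| ≤ ‖z - 1‖ := by
    simpa using Complex.abs_re_le_norm (z - 1)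
  have h2 := abs_lt.mp (lt_of_le_of_lt h1 hz)
  refine ⟨by linarith [h2.1], ?_⟩
  calc ‖z‖ = ‖(z - 1) + 1‖ := by ring_nf
    _ ≤ ‖z - 1‖ + ‖(1:ℂ)‖ := norm_add_le _ _
    _ < 2 := by rw [norm_one]; linarith

private lemma hasDerivAt_f (ε : ℝ) {z : ℂ} (hz : z ∈ Metric.ball (1:ℂ) 1) :
    HasDerivAt (fun w : ℂ => w - w ^ ((1 + ε : ℝ) : ℂ) / 4)
      (1 - ((1 + ε : ℝ) : ℂ) * z ^ ((ε : ℝ) : ℂ) / 4) z := by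
  have hre := (ball_facts hz).1
  have hslit : z ∈ Complex.slitPlane := Or.inl hre
  have h1 : HasDerivAt (fun w : ℂ => w ^ ((1 + ε : ℝ) : ℂ))
      (((1 + ε : ℝ) : ℂ) * z ^ ((ε : ℝ) : ℂ)) z := by
    have h := (hasDerivAt_id z).cpow_const (c := ((1 + ε : ℝ) : ℂ)) hslit
    simp only [id_eq, mul_one] at h
    have he : (((1 + ε : ℝ) : ℂ) - 1) = ((ε : ℝ) : ℂ) := by push_cast; ring
    rwa [he] at h
  exact (hasDerivAt_id' z).sub (h1.div_const 4)

private lemma re_pos (ε : ℝ) (hε : 0 < ε) (hε1 : ε < 1) {z : ℂ}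
    (hz : z ∈ Metric.ball (1:ℂ) 1) :
    0 < (1 - ((1 + ε : ℝ) : ℂ) * z ^ ((ε : ℝ) : ℂ) / 4).re := by
  obtain ⟨hre, habs⟩ := ball_facts hz
  have hz0 : z ≠ 0 := by intro h; simp [h] at hre
  have h1 : ‖z ^ ((ε : ℝ) : ℂ)‖ = ‖z‖ ^ ε := by
    rw [Complex.norm_cpow_of_ne_zero hz0]
    simp
  have h2 : ‖z‖ ^ ε < 2 := by
    calc ‖z‖ ^ ε < 2 ^ ε :=
          Real.rpow_lt_rpow (norm_nonneg z) habs hε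
      _ < 2 ^ (1:ℝ) := Real.rpow_lt_rpow_of_exponent_lt one_lt_two hε1
      _ = 2 := Real.rpow_one 2
  have h3 : ‖((1 + ε : ℝ) : ℂ) * z ^ ((ε : ℝ) : ℂ) / 4‖ < 1 := by
    rw [norm_div, norm_mul, h1]
    have : ‖((1 + ε : ℝ) : ℂ)‖ = 1 + ε := by
      rw [Complex.norm_real, Real.norm_eq_abs, abs_of_pos (by linarith)]
    rw [this]
    have h4 : ‖(4:ℂ)‖ = 4 := by norm_num
    rw [h4]
    rw [div_lt_one (by norm_num)]
    nlinarith [Real.rpow_nonneg (norm_nonneg z) ε]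
  have h5 : |(((1 + ε : ℝ) : ℂ) * z ^ ((ε : ℝ) : ℂ) / 4).re| < 1 :=
    lt_of_le_of_lt (Complex.abs_re_le_norm _) h3
  rw [Complex.sub_re, Complex.one_re]
  cases abs_lt.mp h5 with
  | intro a b => linarith


/-- For `ε ∈ (0,1)`, the function `f(z) = z - z^{1+ε}/4` (principal branch) has
`Re f' > 0` on `𝔻₁ = {|z-1| < 1}` and is injective there. -/
theorem univalent_on_disc (ε : ℝ) (hε : 0 < ε) (hε1 : ε < 1) :
    (∀ z ∈ Metric.ball (1:ℂ) 1,
      0 < (deriv (fun w : ℂ => w - w ^ ((1 + ε : ℝ) : ℂ) / 4) z).re) ∧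
    Set.InjOn (fun w : ℂ => w - w ^ ((1 + ε : ℝ) : ℂ) / 4) (Metric.ball (1:ℂ) 1) := by
  set f : ℂ → ℂ := fun w : ℂ => w - w ^ ((1 + ε : ℝ) : ℂ) / 4 with hf
  have hderiv : ∀ z ∈ Metric.ball (1:ℂ) 1,
      deriv f z = 1 - ((1 + ε : ℝ) : ℂ) * z ^ ((ε : ℝ) : ℂ) / 4 :=
    fun z hz => (hasDerivAt_f ε hz).deriv
  constructor
  · intro z hz
    rw [hderiv z hz]
    exact re_pos ε hε hε1 hz
  · intro z hz w hw hfzw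
    by_contra hne
    set u : ℂ := w - z with hu
    have hu0 : u ≠ 0 := sub_ne_zero.mpr (Ne.symm hne)
    -- the segment stays in the ball
    have hseg : ∀ t ∈ Set.Icc (0:ℝ) 1, z + (t : ℂ) * u ∈ Metric.ball (1:ℂ) 1 := by
      intro t ht
      have := convex_ball (1:ℂ) 1 hz hw (by linarith [ht.1, ht.2] : (0:ℝ) ≤ 1 - t) ht.1
        (by ring)
      convert this using 1
      simp only [hu, Complex.real_smul]
      push_cast
      ring
    set g : ℝ → ℝ := fun t => ((starRingEnd ℂ) u * f (z + (t : ℂ) * u)).re with hg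
    have hgd : ∀ t ∈ Set.Icc (0:ℝ) 1, HasDerivAt g
        (((starRingEnd ℂ) u * ((1 - ((1 + ε : ℝ) : ℂ) * (z + (t : ℂ) * u) ^ ((ε : ℝ) : ℂ) / 4) * u)).re) t := by
      intro t ht
      have hline : HasDerivAt (fun s : ℝ => z + (s : ℂ) * u) u t := by
        have : HasDerivAt (fun s : ℂ => z + s * u) u (t : ℂ) := by
          simpa using ((hasDerivAt_id (t:ℂ)).mul_const u).const_add z
        exact this.comp_ofReal
      have hF := (hasDerivAt_f ε (hseg t ht)).comp t hline
      have hF2 := hF.const_mul ((starRingEnd ℂ) u)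
      exact (Complex.reCLM.hasFDerivAt.comp_hasDerivAt t hF2)
    have hmono : StrictMonoOn g (Set.Icc (0:ℝ) 1) := by
      apply strictMonoOn_of_deriv_pos (convex_Icc 0 1)
      · exact fun t ht => (hgd t ht).continuousAt.continuousWithinAt
      · intro t ht
        rw [interior_Icc] at ht
        have ht' : t ∈ Set.Icc (0:ℝ) 1 := ⟨ht.1.le, ht.2.le⟩
        rw [(hgd t ht').deriv]
        have : (starRingEnd ℂ) u * ((1 - ((1 + ε : ℝ) : ℂ) * (z + (t : ℂ) * u) ^ ((ε : ℝ) : ℂ) / 4) * u)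
            = ((Complex.normSq u : ℝ) : ℂ) * (1 - ((1 + ε : ℝ) : ℂ) * (z + (t : ℂ) * u) ^ ((ε : ℝ) : ℂ) / 4) := by
          rw [Complex.normSq_eq_conj_mul_self]
          ring
        rw [this]
        have hpos := re_pos ε hε hε1 (hseg t ht')
        rw [Complex.re_ofReal_mul]
        exact mul_pos (Complex.normSq_pos.mpr hu0) hpos
    have h01 : g 0 < g 1 := hmono (Set.left_mem_Icc.mpr zero_le_one)
      (Set.right_mem_Icc.mpr zero_le_one) zero_lt_one
    have : g 0 = g 1 := by
      simp only [hg]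
      norm_num
      rw [show z + u = w by rw [hu]; ring, hfzw]
    linarith
end
end
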